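/- Let A be a commutative Noetherian ring, X a set, G a group of permutations of X, and ≤ a term ordering of X^⋄ that is lovely for G. Then every G-invariant ideal I of R = A[X] has a finite Gröbner basis: there exists a finite set B of nonzero elements of I such that lt(I) = lt(B). -/

import Mathlib

/-- A quasi-ordering (here: any binary relation) `r` on `S` is a well-quasi-ordering if
every infinite sequence is good, i.e. there are `i < j` with `r (f i) (f j)`. -/
def IsWQO {S : Type*} (r : S → S → Prop) : Prop :=
  ∀ f : ℕ → S, ∃ i j : ℕ, i < j ∧ r (f i) (f j)

/-- A term ordering of the monoid of monomials `X →₀ ℕ`: a linear order which is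
well-founded, with `1 ≤ x` for every indeterminate `x`, and compatible with
multiplication by indeterminates. -/
def IsTermOrder {X : Type*} (r : (X →₀ ℕ) → (X →₀ ℕ) → Prop) : Prop :=
  IsLinearOrder (X →₀ ℕ) r ∧
  WellFounded (fun v w : X →₀ ℕ => r v w ∧ v ≠ w) ∧
  (∀ x : X, r 0 (Finsupp.single x 1)) ∧
  (∀ (v w : X →₀ ℕ) (x : X), r v w → r (Finsupp.single x 1 + v) (Finsupp.single x 1 + w))

/-- The symmetric cancellation ordering corresponding to a permutation group `G` on `X`
and a term ordering `r` of the monomials `X →₀ ℕ`:  `v ⪯ w` iff `r v w` and there are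
`σ ∈ G` and a monomial `u` with `w = u·σv` and `u·σv' ≤ w` for every `v' ≤ v`. -/
def SymCancel {X : Type*} (G : Subgroup (Equiv.Perm X))
    (r : (X →₀ ℕ) → (X →₀ ℕ) → Prop) (v w : X →₀ ℕ) : Prop :=
  r v w ∧ ∃ σ : Equiv.Perm X, σ ∈ G ∧ ∃ u : X →₀ ℕ,
    w = u + Finsupp.mapDomain (⇑σ) v ∧
    ∀ v' : X →₀ ℕ, r v' v → r (u + Finsupp.mapDomain (⇑σ) v') w

/-- The lexicographic ordering of monomials induced by a linear order on `X`:
`v ≤lex w` iff `v = w` or there is `x` with `v x < w x` and `v y = w y` for all `y > x`. -/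
def LexLe {X : Type*} [LinearOrder X] (v w : X →₀ ℕ) : Prop :=
  v = w ∨ ∃ x : X, v x < w x ∧ ∀ y : X, x < y → v y = w y

/-- `ltSpan r prec B`: the `A`-submodule of `A[X]` generated by all monomial terms
`lc(g)·w` where `g ∈ B` is nonzero with leading monomial `v = lm g` (w.r.t. the term
ordering `r`) and `w` is a monomial with `v ⪯ w` (w.r.t. `prec`).  For `prec` the
symmetric cancellation ordering this is the module `lt(B)` of the paper. -/
noncomputable def ltSpan {A : Type*} [CommRing A] {X : Type*}
    (r prec : (X →₀ ℕ) → (X →₀ ℕ) → Prop)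
    (B : Set (MvPolynomial X A)) : Submodule A (MvPolynomial X A) :=
  Submodule.span A {p : MvPolynomial X A | ∃ g ∈ B, ∃ v ∈ g.support,
    (∀ m ∈ g.support, r m v) ∧ ∃ w : X →₀ ℕ, prec v w ∧
      p = MvPolynomial.monomial w (MvPolynomial.coeff v g)}

/-! ### Auxiliary lemmas -/

lemma symCancel_refl {X : Type*} (G : Subgroup (Equiv.Perm X))
    {r : (X →₀ ℕ) → (X →₀ ℕ) → Prop} (hr : IsLinearOrder (X →₀ ℕ) r) (v : X →₀ ℕ) :
    SymCancel G r v v := by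
  refine ⟨hr.refl v, 1, one_mem G, 0, ?_, ?_⟩
  · simp [Finsupp.mapDomain_id]
  · intro v' hv'
    simpa [Finsupp.mapDomain_id] using hv'

lemma symCancel_trans {X : Type*} (G : Subgroup (Equiv.Perm X))
    {r : (X →₀ ℕ) → (X →₀ ℕ) → Prop} (hr : IsLinearOrder (X →₀ ℕ) r) :
    Transitive (SymCancel G r) := by
  rintro v w t ⟨h1, σ, hσ, u, rfl, hall⟩ ⟨h2, τ, hτ, u', rfl, hall'⟩
  haveI := hr
  refine ⟨Trans.trans h1 h2, τ * σ, mul_mem hτ hσ, u' + Finsupp.mapDomain (⇑τ) u, ?_, ?_⟩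
  · simp [Finsupp.mapDomain_add, Equiv.Perm.coe_mul, Finsupp.mapDomain_comp, add_assoc]
  · intro v' hv'
    have h3 := hall' _ (hall v' hv')
    have e : u' + Finsupp.mapDomain (⇑τ) (u + Finsupp.mapDomain (⇑σ) v')
        = u' + Finsupp.mapDomain (⇑τ) u + Finsupp.mapDomain (⇑(τ * σ)) v' := by
      simp [Finsupp.mapDomain_add, Equiv.Perm.coe_mul, Finsupp.mapDomain_comp, add_assoc]
    rwa [e] at h3

lemma ltSpan_mono {A : Type*} [CommRing A] {X : Type*}
    (r prec : (X →₀ ℕ) → (X →₀ ℕ) → Prop)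
    {B B' : Set (MvPolynomial X A)} (h : B ⊆ B') :
    ltSpan r prec B ≤ ltSpan r prec B' := by
  apply Submodule.span_mono
  rintro p ⟨g, hg, v, hv, hmax, w, hw, rfl⟩
  exact ⟨g, h hg, v, hv, hmax, w, hw, rfl⟩

/-- If a single monomial term `a·X^v` lies in `lt(B)` and `v ⪯ w`, then `a·X^w ∈ lt(B)`. -/
lemma monomial_mem_ltSpan_of_prec {A : Type*} [CommRing A] {X : Type*}
    {r prec : (X →₀ ℕ) → (X →₀ ℕ) → Prop} (htrans : Transitive prec)
    {B : Set (MvPolynomial X A)} {v w : X →₀ ℕ} {a : A} (hvw : prec v w)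
    (hm : (MvPolynomial.monomial v) a ∈ ltSpan r prec B) :
    (MvPolynomial.monomial w) a ∈ ltSpan r prec B := by
  classical
  set D : Set A := {c | ∃ g ∈ B, ∃ v' ∈ g.support,
      (∀ m ∈ g.support, r m v') ∧ prec v' v ∧ c = MvPolynomial.coeff v' g} with hD
  have ha : a ∈ Submodule.span A D := by
    have h2 : MvPolynomial.lcoeff A v ((MvPolynomial.monomial v) a)
        ∈ Submodule.map (MvPolynomial.lcoeff A v) (ltSpan r prec B) := ⟨_, hm, rfl⟩
    rw [ltSpan, Submodule.map_span] at h2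
    have h1 : MvPolynomial.lcoeff A v ((MvPolynomial.monomial v) a) = a := by
      simp [MvPolynomial.coeff_monomial]
    rw [h1] at h2
    refine Submodule.span_le.mpr ?_ h2
    rintro c ⟨p, ⟨g, hg, v', hv', hmax, w', hprec, rfl⟩, rfl⟩
    by_cases hww : w' = v
    · have : MvPolynomial.lcoeff A v ((MvPolynomial.monomial w') (MvPolynomial.coeff v' g))
          = MvPolynomial.coeff v' g := by simp [hww, MvPolynomial.coeff_monomial]
      rw [this]
      exact Submodule.subset_span ⟨g, hg, v', hv', hmax, hww ▸ hprec, rfl⟩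
    · have : MvPolynomial.lcoeff A v ((MvPolynomial.monomial w') (MvPolynomial.coeff v' g))
          = 0 := by simp [MvPolynomial.coeff_monomial, hww]
      rw [this]
      exact Submodule.zero_mem _
  have h3 : (MvPolynomial.monomial w) a
      ∈ Submodule.map (MvPolynomial.monomial (R := A) w) (Submodule.span A D) := ⟨a, ha, rfl⟩
  rw [Submodule.map_span] at h3
  refine Submodule.span_le.mpr ?_ h3
  rintro p ⟨c, ⟨g, hg, v', hv', hmax, hpv, rfl⟩, rfl⟩
  exact Submodule.subset_span ⟨g, hg, v', hv', hmax, w, htrans hpv hvw, rfl⟩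

/-- If the leading term of every member of `S` lies in `lt(B)`, then `lt(S) ≤ lt(B)`. -/
lemma ltSpan_le_of_leadingTerms {A : Type*} [CommRing A] {X : Type*}
    {r prec : (X →₀ ℕ) → (X →₀ ℕ) → Prop} (htrans : Transitive prec)
    {S B : Set (MvPolynomial X A)}
    (h : ∀ g ∈ S, ∀ v ∈ g.support, (∀ m ∈ g.support, r m v) →
      (MvPolynomial.monomial v) (MvPolynomial.coeff v g) ∈ ltSpan r prec B) :
    ltSpan r prec S ≤ ltSpan r prec B := by
  refine Submodule.span_le.mpr ?_
  rintro p ⟨g, hg, v, hv, hmax, w, hprec, rfl⟩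
  exact monomial_mem_ltSpan_of_prec htrans hprec (h g hg v hv hmax)

/-- WQO + Noetherianity: along any sequence of (monomial, coefficient) pairs, some
coefficient lies in the ideal generated by earlier coefficients whose monomials precede
the current one. -/
lemma exists_coeff_mem_span {A : Type*} [CommRing A] [IsNoetherianRing A] {M : Type*}
    {prec : M → M → Prop} (hrefl : ∀ x, prec x x) (htrans : Transitive prec)
    (hwqo : IsWQO prec) (v : ℕ → M) (a : ℕ → A) :
    ∃ n, a n ∈ Submodule.span A {b | ∃ i, i < n ∧ prec (v i) (v n) ∧ b = a i} := by
  haveI : IsRefl M prec := ⟨hrefl⟩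
  haveI : IsTrans M prec := ⟨fun _ _ _ h1 h2 => htrans h1 h2⟩
  haveI : IsPreorder M prec := {}
  have hp : (Set.univ : Set M).PartiallyWellOrderedOn prec := fun f => hwqo (fun n => (f n).1)
  obtain ⟨g, hg⟩ := hp.exists_monotone_subseq (f := v) (fun _ => Set.mem_univ _)
  have hNoeth : IsNoetherian A A := by rwa [← isNoetherianRing_iff]
  set J : ℕ →o Submodule A A :=
    ⟨fun k => Submodule.span A (a '' (⇑g '' Set.Iic k)),
      fun k l hkl => Submodule.span_mono
        (Set.image_mono (Set.image_mono (Set.Iic_subset_Iic.mpr hkl)))⟩ with hJ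
  obtain ⟨k, hk⟩ := monotone_stabilizes_iff_noetherian.mpr hNoeth J
  refine ⟨g (k + 1), ?_⟩
  have h1 : a (g (k + 1)) ∈ J (k + 1) :=
    Submodule.subset_span ⟨g (k + 1), ⟨k + 1, Set.mem_Iic.mpr le_rfl, rfl⟩, rfl⟩
  rw [← hk (k + 1) (Nat.le_succ k)] at h1
  refine Submodule.span_le.mpr ?_ h1
  rintro b ⟨m, ⟨i, hik, rfl⟩, rfl⟩
  refine Submodule.subset_span ⟨g i, ?_, ?_, rfl⟩
  · exact g.strictMono (lt_of_le_of_lt hik (Nat.lt_succ_self k))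
  · exact hg i (k + 1) (le_trans hik (Nat.le_succ k))

/-- If `A` is commutative Noetherian and the term ordering `r` of the
monomials is lovely for `G`, then every `G`-invariant ideal `I` of `A[X]` has a finite
Gröbner basis: a finite set `B` of nonzero elements of `I` with `lt(I) = lt(B)`. -/
theorem stmt12 {A : Type*} [CommRing A] [IsNoetherianRing A] {X : Type*}
    (G : Subgroup (Equiv.Perm X)) (r : (X →₀ ℕ) → (X →₀ ℕ) → Prop)
    (hr : IsTermOrder r) (hlovely : IsWQO (SymCancel G r))
    (I : Ideal (MvPolynomial X A))
    (hI : ∀ σ ∈ G, ∀ f ∈ I, MvPolynomial.rename (⇑σ) f ∈ I) :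
    ∃ B : Finset (MvPolynomial X A), ↑B ⊆ (I : Set (MvPolynomial X A)) ∧
      (0 : MvPolynomial X A) ∉ B ∧
      ltSpan r (SymCancel G r) (I : Set (MvPolynomial X A)) =
        ltSpan r (SymCancel G r) (↑B : Set (MvPolynomial X A)) := by
  classical
  set R := MvPolynomial X A
  set prec := SymCancel G r with hprec_def
  have hlin : IsLinearOrder (X →₀ ℕ) r := hr.1
  have hrefl : ∀ x, prec x x := symCancel_refl G hlin
  have htrans : Transitive prec := symCancel_trans G hlin
  by_contra hcon
  push_neg at hcon
  -- From the failure, for every candidate finite set we can pick a bad leading term.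
  have key : ∀ s : Finset R, ↑s ⊆ (I : Set R) → (0 : R) ∉ s →
      ∃ f, f ∈ I ∧ ∃ v, v ∈ f.support ∧ (∀ m ∈ f.support, r m v) ∧
        (MvPolynomial.monomial v) (MvPolynomial.coeff v f) ∉ ltSpan r prec ↑s := by
    intro s hs h0
    by_contra hno
    push_neg at hno
    refine hcon s hs h0 (le_antisymm ?_ (ltSpan_mono r prec hs))
    refine ltSpan_le_of_leadingTerms htrans ?_
    intro g hg v hv hmax
    by_contra hng
    exact hng (hno g hg v hv hmax)
  -- Build an infinite sequence of counterexamples.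
  have keyT : ∀ t : {s : Finset R // ↑s ⊆ (I : Set R) ∧ (0 : R) ∉ s},
      ∃ f, f ∈ I ∧ f ≠ 0 ∧ ∃ v, v ∈ f.support ∧ (∀ m ∈ f.support, r m v) ∧
        (MvPolynomial.monomial v) (MvPolynomial.coeff v f) ∉ ltSpan r prec ↑t.1 := by
    intro t
    obtain ⟨f, hfI, v, hv, hmax, hnot⟩ := key t.1 t.2.1 t.2.2
    refine ⟨f, hfI, ?_, v, hv, hmax, hnot⟩
    intro h0
    rw [h0] at hv
    simp at hv
  set T := {s : Finset R // ↑s ⊆ (I : Set R) ∧ (0 : R) ∉ s}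
  let pick : T → R := fun t => (keyT t).choose
  have hpick : ∀ t : T, pick t ∈ I ∧ pick t ≠ 0 ∧ ∃ v, v ∈ (pick t).support ∧
      (∀ m ∈ (pick t).support, r m v) ∧
      (MvPolynomial.monomial v) (MvPolynomial.coeff v (pick t)) ∉ ltSpan r prec ↑t.1 :=
    fun t => (keyT t).choose_spec
  let step : T → T := fun t => ⟨insert (pick t) t.1, by
    constructor
    · rw [Finset.coe_insert]
      exact Set.insert_subset (hpick t).1 t.2.1
    · intro h0
      rcases Finset.mem_insert.mp h0 with h | h
      · exact (hpick t).2.1 h.symm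
      · exact t.2.2 h⟩
  let Bs : ℕ → T := fun n => Nat.rec ⟨∅, by simp⟩ (fun _ t => step t) n
  have hBs : ∀ n, Bs (n + 1) = step (Bs n) := fun n => rfl
  let f : ℕ → R := fun n => pick (Bs n)
  have hmono : ∀ m n, m ≤ n → (Bs m).1 ⊆ (Bs n).1 := by
    intro m n hmn
    induction n with
    | zero => rw [Nat.le_zero.mp hmn]
    | succ n ih =>
      rcases hmn.lt_or_eq with h | h
      · exact (ih (Nat.lt_succ_iff.mp h)).trans
          (by rw [hBs n]; exact Finset.subset_insert _ _)
      · rw [h]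
  have hfmem : ∀ i n, i < n → f i ∈ (Bs n).1 := by
    intro i n hin
    have h1 : f i ∈ (Bs (i + 1)).1 := by
      rw [hBs i]
      exact Finset.mem_insert_self _ _
    exact hmono (i + 1) n hin h1
  let v : ℕ → (X →₀ ℕ) := fun n => ((hpick (Bs n)).2.2).choose
  have hv : ∀ n, v n ∈ (f n).support ∧ (∀ m ∈ (f n).support, r m (v n)) ∧
      (MvPolynomial.monomial (v n)) (MvPolynomial.coeff (v n) (f n))
        ∉ ltSpan r prec ↑(Bs n).1 := fun n => ((hpick (Bs n)).2.2).choose_spec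
  let a : ℕ → A := fun n => MvPolynomial.coeff (v n) (f n)
  obtain ⟨n, hn⟩ := exists_coeff_mem_span hrefl htrans hlovely v a
  refine (hv n).2.2 ?_
  have h3 : (MvPolynomial.monomial (v n)) (a n)
      ∈ Submodule.map (MvPolynomial.monomial (R := A) (v n))
        (Submodule.span A {b | ∃ i, i < n ∧ prec (v i) (v n) ∧ b = a i}) := ⟨a n, hn, rfl⟩
  rw [Submodule.map_span] at h3
  refine Submodule.span_le.mpr ?_ h3
  rintro p ⟨b, ⟨i, hin, hprec, rfl⟩, rfl⟩
  exact Submodule.subset_span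
    ⟨f i, Finset.mem_coe.mpr (hfmem i n hin), v i, (hv i).1, (hv i).2.1, v n, hprec, rfl⟩
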